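/- Let k be a field and F ∈ k[x_0,x_1,x_2,x_3] a nonzero cubic form defining a surface X ⊆ ℙ³_k that does not contain any plane defined over k. If P_1, P_2, P_3 are three distinct singular k-points of X lying on a common line L, then every point of L is a singular point of X. -/

import Mathlib

open MvPolynomial

section Aux

variable {k : Type*} [Field k]

/-- A binary quadratic form vanishing at three pairwise non-proportional points
has zero coefficients. -/
lemma stmt13_quadZero {α β γ s1 t1 s2 t2 s3 t3 : k}
    (h12 : s1*t2 - s2*t1 ≠ 0) (h13 : s1*t3 - s3*t1 ≠ 0) (h23 : s2*t3 - s3*t2 ≠ 0)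
    (e1 : α*s1^2 + β*(s1*t1) + γ*t1^2 = 0)
    (e2 : α*s2^2 + β*(s2*t2) + γ*t2^2 = 0)
    (e3 : α*s3^2 + β*(s3*t3) + γ*t3^2 = 0) :
    α = 0 ∧ β = 0 ∧ γ = 0 := by
  have hD : (s1*t2 - s2*t1) * ((s1*t3 - s3*t1) * (s2*t3 - s3*t2)) ≠ 0 :=
    mul_ne_zero h12 (mul_ne_zero h13 h23)
  refine ⟨?_, ?_, ?_⟩
  · have h : α * ((s1*t2 - s2*t1) * ((s1*t3 - s3*t1) * (s2*t3 - s3*t2))) = 0 := by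
      linear_combination (t2*t3*(s2*t3 - s3*t2)) * e1 - (t1*t3*(s1*t3 - s3*t1)) * e2
        + (t1*t2*(s1*t2 - s2*t1)) * e3
    exact (mul_eq_zero.mp h).resolve_right hD
  · have h : β * ((s1*t2 - s2*t1) * ((s1*t3 - s3*t1) * (s2*t3 - s3*t2))) = 0 := by
      linear_combination (-(s2*t3 - s3*t2)*(s2*t3 + s3*t2)) * e1
        + ((s1*t3 - s3*t1)*(s1*t3 + s3*t1)) * e2 - ((s1*t2 - s2*t1)*(s1*t2 + s2*t1)) * e3
    exact (mul_eq_zero.mp h).resolve_right hD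
  · have h : γ * ((s1*t2 - s2*t1) * ((s1*t3 - s3*t1) * (s2*t3 - s3*t2))) = 0 := by
      linear_combination (s2*s3*(s2*t3 - s3*t2)) * e1 - (s1*s3*(s1*t3 - s3*t1)) * e2
        + (s1*s2*(s1*t2 - s2*t1)) * e3
    exact (mul_eq_zero.mp h).resolve_right hD

lemma stmt13_coeff_pderiv {σ : Type*} [DecidableEq σ] (i : σ)
    (m : σ →₀ ℕ) (f : MvPolynomial σ k) :
    coeff m (pderiv i f) = coeff (m + Finsupp.single i 1) f * (m i + 1) := by
  conv_lhs => rw [f.as_sum, map_sum]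
  rw [coeff_sum]
  simp_rw [pderiv_monomial, coeff_monomial]
  rw [Finset.sum_eq_single (m + Finsupp.single i 1)]
  · simp [add_tsub_cancel_right]
  · intro s _ hne
    by_cases hd : s - Finsupp.single i 1 = m
    · by_cases hsi : s i = 0
      · simp [hd, hsi]
      · exfalso
        apply hne
        ext j
        have hj := DFunLike.congr_fun hd j
        by_cases hji : j = i
        · subst hji
          simp [Finsupp.tsub_apply, Finsupp.single_apply] at hj ⊢
          omega
        · simp [Finsupp.tsub_apply, Finsupp.single_apply, Ne.symm hji] at hj ⊢
          omega
    · simp [hd]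
  · intro h
    rw [MvPolynomial.notMem_support_iff] at h
    simp [h]

lemma stmt13_pderiv_homog {σ : Type*} [DecidableEq σ] (i : σ)
    {f : MvPolynomial σ k} {n : ℕ} (hf : f.IsHomogeneous (n+1)) :
    (pderiv i f).IsHomogeneous n := by
  intro d hd
  rw [stmt13_coeff_pderiv] at hd
  have h1 : coeff (d + Finsupp.single i 1) f ≠ 0 := fun h => hd (by simp [h])
  have h2 := hf h1
  rw [map_add] at h2
  have h3 : (Finsupp.weight 1) (Finsupp.single i 1) = 1 := by
    rw [Finsupp.weight_apply, Finsupp.sum_single_index] <;> simp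
  omega

lemma stmt13_eval_aeval_line (A B : Fin 4 → k) (s t : k)
    (g : MvPolynomial (Fin 4) k) :
    eval ![s,t] (aeval (fun j => C (A j) * X 0 + C (B j) * X 1 :
        Fin 4 → MvPolynomial (Fin 2) k) g) = eval (s • A + t • B) g := by
  induction g using MvPolynomial.induction_on with
  | C a => simp
  | add p q hp hq => simp only [map_add, hp, hq]
  | mul_X p i hp =>
      simp only [map_mul, aeval_X, map_add, eval_mul, eval_add, eval_C, eval_X,
        Matrix.cons_val_zero, Matrix.cons_val_one, Matrix.head_cons, Pi.add_apply,
        Pi.smul_apply, smul_eq_mul, hp]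
      ring

lemma stmt13_chainRule (A B : Fin 4 → k) (i : Fin 2) (g : MvPolynomial (Fin 4) k) :
    pderiv i (aeval (fun j => C (A j) * X 0 + C (B j) * X 1 :
        Fin 4 → MvPolynomial (Fin 2) k) g)
      = ∑ j : Fin 4, pderiv i ((C (A j) * X 0 + C (B j) * X 1 : MvPolynomial (Fin 2) k))
          * aeval (fun j => C (A j) * X 0 + C (B j) * X 1 :
              Fin 4 → MvPolynomial (Fin 2) k) (pderiv j g) := by
  set l : Fin 4 → MvPolynomial (Fin 2) k := fun j => C (A j) * X 0 + C (B j) * X 1 with hl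
  set u : Fin 4 → MvPolynomial (Fin 2) k := fun j => pderiv i (l j) with hu
  induction g using MvPolynomial.induction_on with
  | C a => simp
  | add p q hp hq =>
      simp only [map_add, hp, hq, mul_add, ← Finset.sum_add_distrib]
  | mul_X p m hp =>
      have hXm : ∀ j : Fin 4, (pderiv j (X m : MvPolynomial (Fin 4) k))
          = if j = m then 1 else 0 := by
        intro j
        by_cases h : j = m
        · subst h; simp [pderiv_X_self]
        · simp [h, pderiv_X_of_ne (Ne.symm h)]
      have step : ∀ j : Fin 4, u j * aeval l (pderiv j (p * X m))
          = u j * aeval l (pderiv j p) * l m + (if j = m then u j * aeval l p else 0) := by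
        intro j
        rw [pderiv_mul, hXm j]
        split <;> simp <;> ring
      calc pderiv i (aeval l (p * X m))
          = pderiv i (aeval l p * l m) := by rw [map_mul, aeval_X]
        _ = pderiv i (aeval l p) * l m + aeval l p * u m := by rw [pderiv_mul, hu]
        _ = (∑ j : Fin 4, u j * aeval l (pderiv j p)) * l m + aeval l p * u m := by rw [hp]
        _ = ∑ j : Fin 4, (u j * aeval l (pderiv j p) * l m
              + (if j = m then u j * aeval l p else 0)) := by
            rw [Finset.sum_add_distrib, Finset.sum_ite_eq' Finset.univ m
              (fun j => u j * aeval l p)]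
            simp [Finset.sum_mul, Finset.mul_sum, mul_comm]
        _ = ∑ j : Fin 4, u j * aeval l (pderiv j (p * X m)) := by
            exact (Finset.sum_congr rfl fun j _ => (step j).symm)

lemma stmt13_fin2_eq (d : Fin 2 →₀ ℕ) :
    d = Finsupp.single 0 (d 0) + Finsupp.single 1 (d 1) := by
  ext j
  fin_cases j <;> simp [Finsupp.single_apply]

lemma stmt13_fin2_degree {Q : MvPolynomial (Fin 2) k} {n : ℕ} (hQ : Q.IsHomogeneous n)
    {d : Fin 2 →₀ ℕ} (hd : d ∈ Q.support) : d 0 + d 1 = n := by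
  have h := hQ (MvPolynomial.mem_support_iff.mp hd)
  have : (Finsupp.weight 1) d = d 0 + d 1 := by
    rw [Finsupp.weight_apply, Finsupp.sum_fintype _ _ (by simp)]
    simp [Fin.sum_univ_two]
  omega

lemma stmt13_quadStruct (Q : MvPolynomial (Fin 2) k) (hQ : Q.IsHomogeneous 2) (s t : k) :
    eval ![s,t] Q = coeff (Finsupp.single 0 2) Q * s^2
      + coeff (Finsupp.single 0 1 + Finsupp.single 1 1) Q * (s*t)
      + coeff (Finsupp.single 1 2) Q * t^2 := by
  classical
  rw [eval_eq']
  have hsub : Q.support ⊆ ({Finsupp.single 0 2,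
      Finsupp.single 0 1 + Finsupp.single 1 1, Finsupp.single 1 2} :
      Finset (Fin 2 →₀ ℕ)) := by
    intro d hd
    have h2 := stmt13_fin2_degree hQ hd
    have hde := stmt13_fin2_eq d
    simp only [Finset.mem_insert, Finset.mem_singleton]
    rcases (by omega : d 0 = 2 ∧ d 1 = 0 ∨ d 0 = 1 ∧ d 1 = 1 ∨ d 0 = 0 ∧ d 1 = 2) with
      ⟨h0, h1⟩ | ⟨h0, h1⟩ | ⟨h0, h1⟩ <;> rw [h0, h1] at hde <;> simp [hde]
  rw [Finset.sum_subset hsub (by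
    intro d _ hd
    rw [MvPolynomial.notMem_support_iff.mp hd]
    ring)]
  have ne1 : (Finsupp.single 0 2 : Fin 2 →₀ ℕ) ≠ Finsupp.single 0 1 + Finsupp.single 1 1 := by
    intro h; have := DFunLike.congr_fun h 1; simp [Finsupp.single_apply] at this
  have ne2 : (Finsupp.single 0 2 : Fin 2 →₀ ℕ) ≠ Finsupp.single 1 2 := by
    intro h; have := DFunLike.congr_fun h 0; simp [Finsupp.single_apply] at this
  have ne3 : (Finsupp.single 0 1 + Finsupp.single 1 1 : Fin 2 →₀ ℕ) ≠ Finsupp.single 1 2 := by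
    intro h; have := DFunLike.congr_fun h 0; simp [Finsupp.single_apply] at this
  rw [Finset.sum_insert (by simp [ne1, ne2]), Finset.sum_insert (by simp [ne3]),
    Finset.sum_singleton]
  simp [Fin.prod_univ_two, Finsupp.single_apply]
  ring

lemma stmt13_quad_eq_zero {Q : MvPolynomial (Fin 2) k} (hQ : Q.IsHomogeneous 2)
    (h1 : coeff (Finsupp.single 0 2) Q = 0)
    (h2 : coeff (Finsupp.single 0 1 + Finsupp.single 1 1) Q = 0)
    (h3 : coeff (Finsupp.single 1 2) Q = 0) : Q = 0 := by
  ext d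
  rw [coeff_zero]
  by_cases hd : d ∈ Q.support
  · have hdeg := stmt13_fin2_degree hQ hd
    have hde := stmt13_fin2_eq d
    rcases (by omega : d 0 = 2 ∧ d 1 = 0 ∨ d 0 = 1 ∧ d 1 = 1 ∨ d 0 = 0 ∧ d 1 = 2) with
      ⟨ha, hb⟩ | ⟨ha, hb⟩ | ⟨ha, hb⟩ <;> rw [ha, hb] at hde
    · rw [hde, Finsupp.single_zero, add_zero]; exact h1
    · rw [hde]; exact h2
    · rw [hde, Finsupp.single_zero, zero_add]; exact h3
  · exact MvPolynomial.notMem_support_iff.mp hd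

lemma stmt13_cubicStruct (Q : MvPolynomial (Fin 2) k) (hQ : Q.IsHomogeneous 3) (s t : k) :
    eval ![s,t] Q = coeff (Finsupp.single 0 3) Q * s^3
      + coeff (Finsupp.single 0 2 + Finsupp.single 1 1) Q * (s^2*t)
      + coeff (Finsupp.single 0 1 + Finsupp.single 1 2) Q * (s*t^2)
      + coeff (Finsupp.single 1 3) Q * t^3 := by
  classical
  rw [eval_eq']
  have hsub : Q.support ⊆ ({Finsupp.single 0 3,
      Finsupp.single 0 2 + Finsupp.single 1 1,
      Finsupp.single 0 1 + Finsupp.single 1 2, Finsupp.single 1 3} :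
      Finset (Fin 2 →₀ ℕ)) := by
    intro d hd
    have h2 := stmt13_fin2_degree hQ hd
    have hde := stmt13_fin2_eq d
    simp only [Finset.mem_insert, Finset.mem_singleton]
    rcases (by omega : d 0 = 3 ∧ d 1 = 0 ∨ d 0 = 2 ∧ d 1 = 1 ∨
        d 0 = 1 ∧ d 1 = 2 ∨ d 0 = 0 ∧ d 1 = 3) with
      ⟨h0, h1⟩ | ⟨h0, h1⟩ | ⟨h0, h1⟩ | ⟨h0, h1⟩ <;> rw [h0, h1] at hde
    · exact Or.inl (by rw [hde]; simp)
    · exact Or.inr (Or.inl (by rw [hde]))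
    · exact Or.inr (Or.inr (Or.inl (by rw [hde])))
    · exact Or.inr (Or.inr (Or.inr (by rw [hde]; simp)))
  rw [Finset.sum_subset hsub (by
    intro d _ hd
    rw [MvPolynomial.notMem_support_iff.mp hd]
    ring)]
  have key : ∀ x y : Fin 2 →₀ ℕ, x 0 ≠ y 0 → x ≠ y := by
    intro x y h hxy; exact h (by rw [hxy])
  have ne12 : (Finsupp.single 0 3 : Fin 2 →₀ ℕ) ≠ Finsupp.single 0 2 + Finsupp.single 1 1 :=
    key _ _ (by simp [Finsupp.single_apply])
  have ne13 : (Finsupp.single 0 3 : Fin 2 →₀ ℕ) ≠ Finsupp.single 0 1 + Finsupp.single 1 2 :=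
    key _ _ (by simp [Finsupp.single_apply])
  have ne14 : (Finsupp.single 0 3 : Fin 2 →₀ ℕ) ≠ Finsupp.single 1 3 :=
    key _ _ (by simp [Finsupp.single_apply])
  have ne23 : (Finsupp.single 0 2 + Finsupp.single 1 1 : Fin 2 →₀ ℕ)
      ≠ Finsupp.single 0 1 + Finsupp.single 1 2 :=
    key _ _ (by simp [Finsupp.single_apply])
  have ne24 : (Finsupp.single 0 2 + Finsupp.single 1 1 : Fin 2 →₀ ℕ) ≠ Finsupp.single 1 3 :=
    key _ _ (by simp [Finsupp.single_apply])
  have ne34 : (Finsupp.single 0 1 + Finsupp.single 1 2 : Fin 2 →₀ ℕ) ≠ Finsupp.single 1 3 :=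
    key _ _ (by simp [Finsupp.single_apply])
  rw [Finset.sum_insert (by simp [ne12, ne13, ne14]),
    Finset.sum_insert (by simp [ne23, ne24]),
    Finset.sum_insert (by simp [ne34]), Finset.sum_singleton]
  simp [Fin.prod_univ_two, Finsupp.single_apply]
  ring

end Aux

/-- Let `k` be a field and `F` a nonzero cubic form in four variables defining a
surface `X ⊆ ℙ³_k` not containing any `k`-plane (no nonzero linear form divides `F`).  If three
pairwise non-proportional singular `k`-points of `X` lie on a common line (spanned by linearly
independent vectors `A`, `B`), then every point of that line is a singular point of `X`. -/
theorem stmt_13 (k : Type*) [Field k]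
    (F : MvPolynomial (Fin 4) k) (hF : F.IsHomogeneous 3) (hF0 : F ≠ 0)
    (hplane : ¬ ∃ L : MvPolynomial (Fin 4) k, L ≠ 0 ∧ L.IsHomogeneous 1 ∧ L ∣ F)
    (A B : Fin 4 → k) (hAB : LinearIndependent k ![A, B])
    (P : Fin 3 → k × k)
    (hdist : ∀ a b : Fin 3, a ≠ b →
      ∀ c : k, ¬((P a).1 = c * (P b).1 ∧ (P a).2 = c * (P b).2))
    (hsing : ∀ a : Fin 3,
      eval ((P a).1 • A + (P a).2 • B) F = 0 ∧
      ∀ j : Fin 4, eval ((P a).1 • A + (P a).2 • B) (pderiv j F) = 0) :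
    ∀ s t : k,
      eval (s • A + t • B) F = 0 ∧
      ∀ j : Fin 4, eval (s • A + t • B) (pderiv j F) = 0 := by
  classical
  -- every `P a` is nonzero
  have hne0 : ∀ a : Fin 3, ¬((P a).1 = 0 ∧ (P a).2 = 0) := by
    intro a h
    fin_cases a
    · exact hdist 0 1 (by decide) 0 (by simpa using h)
    · exact hdist 1 0 (by decide) 0 (by simpa using h)
    · exact hdist 2 0 (by decide) 0 (by simpa using h)
  -- pairwise determinants are nonzero
  have hdet : ∀ a b : Fin 3, a ≠ b →
      (P a).1 * (P b).2 - (P b).1 * (P a).2 ≠ 0 := by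
    intro a b hab h
    by_cases h2 : (P b).2 = 0
    · have h1 : (P b).1 ≠ 0 := fun h1 => hne0 b ⟨h1, h2⟩
      apply hdist a b hab ((P a).1 / (P b).1)
      constructor
      · field_simp
      · have hz : (P b).1 * (P a).2 = 0 := by linear_combination -h + (P a).1 * h2
        have h3 : (P a).2 = 0 := (mul_eq_zero.mp hz).resolve_left h1
        rw [h3, h2, mul_zero]
    · apply hdist a b hab ((P a).2 / (P b).2)
      constructor
      · field_simp
        linear_combination h
      · field_simp
  -- the linear forms defining the parametrization of the line
  have hl1 : ∀ j : Fin 4, ((C (A j) * X 0 + C (B j) * X 1 :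
      MvPolynomial (Fin 2) k)).IsHomogeneous 1 :=
    fun j => (isHomogeneous_C_mul_X (A j) 0).add (isHomogeneous_C_mul_X (B j) 1)
  -- the partial derivatives pull back to the zero polynomial on the line
  have hR0 : ∀ j : Fin 4, aeval (fun j => C (A j) * X 0 + C (B j) * X 1 :
      Fin 4 → MvPolynomial (Fin 2) k) (pderiv j F) = 0 := by
    intro j
    have hpd2 : (pderiv j F).IsHomogeneous 2 :=
      stmt13_pderiv_homog j (by exact hF)
    set R : MvPolynomial (Fin 2) k := aeval (fun j => C (A j) * X 0 + C (B j) * X 1 :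
        Fin 4 → MvPolynomial (Fin 2) k) (pderiv j F) with hRdef
    have hRhom : R.IsHomogeneous 2 := by
      have := hpd2.aeval (fun j => C (A j) * X 0 + C (B j) * X 1 :
        Fin 4 → MvPolynomial (Fin 2) k) hl1
      simpa [hRdef] using this
    have hv : ∀ a : Fin 3, eval ![(P a).1, (P a).2] R = 0 := by
      intro a
      rw [hRdef, stmt13_eval_aeval_line]
      exact (hsing a).2 j
    have hq : ∀ a : Fin 3,
        coeff (Finsupp.single 0 2) R * (P a).1^2
        + coeff (Finsupp.single 0 1 + Finsupp.single 1 1) R * ((P a).1*(P a).2)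
        + coeff (Finsupp.single 1 2) R * (P a).2^2 = 0 :=
      fun a => (stmt13_quadStruct R hRhom (P a).1 (P a).2).symm.trans (hv a)
    obtain ⟨hα, hβ, hγ⟩ := stmt13_quadZero (hdet 0 1 (by decide)) (hdet 0 2 (by decide))
      (hdet 1 2 (by decide)) (hq 0) (hq 1) (hq 2)
    exact stmt13_quad_eq_zero hRhom hα hβ hγ
  -- hence both partial derivatives of the pulled-back cubic vanish
  have hpdQ : ∀ i : Fin 2, pderiv i (aeval (fun j => C (A j) * X 0 + C (B j) * X 1 :
      Fin 4 → MvPolynomial (Fin 2) k) F) = 0 := by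
    intro i
    rw [stmt13_chainRule]
    apply Finset.sum_eq_zero
    intro j _
    rw [hR0 j, mul_zero]
  have hQ3 : (aeval (fun j => C (A j) * X 0 + C (B j) * X 1 :
      Fin 4 → MvPolynomial (Fin 2) k) F).IsHomogeneous 3 := by
    have := hF.aeval (fun j => C (A j) * X 0 + C (B j) * X 1 :
      Fin 4 → MvPolynomial (Fin 2) k) hl1
    simpa using this
  set Q : MvPolynomial (Fin 2) k := aeval (fun j => C (A j) * X 0 + C (B j) * X 1 :
      Fin 4 → MvPolynomial (Fin 2) k) F with hQdef
  -- coefficient relations from vanishing derivatives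
  have hb : coeff (Finsupp.single 0 2 + Finsupp.single 1 1) Q = 0 := by
    have h := stmt13_coeff_pderiv (1 : Fin 2) (Finsupp.single 0 2) Q
    rw [hpdQ 1] at h
    simpa using h.symm
  have hc : coeff (Finsupp.single 0 1 + Finsupp.single 1 2) Q = 0 := by
    have h := stmt13_coeff_pderiv (0 : Fin 2) (Finsupp.single 1 2) Q
    rw [hpdQ 0, add_comm] at h
    simpa using h.symm
  have h3a : coeff (Finsupp.single 0 3) Q * 3 = 0 := by
    have h := stmt13_coeff_pderiv (0 : Fin 2) (Finsupp.single 0 2) Q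
    rw [hpdQ 0, ← Finsupp.single_add] at h
    norm_num at h
    rcases h with h | h
    · rw [h, zero_mul]
    · rw [h, mul_zero]
  have h3d : coeff (Finsupp.single 1 3) Q * 3 = 0 := by
    have h := stmt13_coeff_pderiv (1 : Fin 2) (Finsupp.single 1 2) Q
    rw [hpdQ 1, ← Finsupp.single_add] at h
    norm_num at h
    rcases h with h | h
    · rw [h, zero_mul]
    · rw [h, mul_zero]
  -- evaluations at the three singular points
  have hG : ∀ a : Fin 3,
      coeff (Finsupp.single 0 3) Q * (P a).1^3
      + coeff (Finsupp.single 0 2 + Finsupp.single 1 1) Q * ((P a).1^2*(P a).2)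
      + coeff (Finsupp.single 0 1 + Finsupp.single 1 2) Q * ((P a).1*(P a).2^2)
      + coeff (Finsupp.single 1 3) Q * (P a).2^3 = 0 := by
    intro a
    refine (stmt13_cubicStruct Q hQ3 (P a).1 (P a).2).symm.trans ?_
    rw [hQdef, stmt13_eval_aeval_line]
    exact (hsing a).1
  have e1 : coeff (Finsupp.single 0 3) Q * (P 0).1^3
      + coeff (Finsupp.single 1 3) Q * (P 0).2^3 = 0 := by
    linear_combination (hG 0) - ((P 0).1^2*(P 0).2) * hb - ((P 0).1*(P 0).2^2) * hc
  have e2 : coeff (Finsupp.single 0 3) Q * (P 1).1^3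
      + coeff (Finsupp.single 1 3) Q * (P 1).2^3 = 0 := by
    linear_combination (hG 1) - ((P 1).1^2*(P 1).2) * hb - ((P 1).1*(P 1).2^2) * hc
  -- the two extreme coefficients vanish, splitting on the characteristic
  have had : coeff (Finsupp.single 0 3) Q = 0 ∧ coeff (Finsupp.single 1 3) Q = 0 := by
    by_cases h3 : (3 : k) = 0
    · have ha : coeff (Finsupp.single 0 3) Q = 0 := by
        have h : coeff (Finsupp.single 0 3) Q
            * ((P 0).1*(P 1).2 - (P 1).1*(P 0).2)^3 = 0 := by
          linear_combination (P 1).2^3 * e1 - (P 0).2^3 * e2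
            + (coeff (Finsupp.single 0 3) Q * (P 0).1*(P 1).2*(P 1).1*(P 0).2
              *((P 1).1*(P 0).2 - (P 0).1*(P 1).2)) * h3
        rcases mul_eq_zero.mp h with h' | h'
        · exact h'
        · exact absurd (pow_eq_zero_iff (by norm_num) |>.mp h') (hdet 0 1 (by decide))
      refine ⟨ha, ?_⟩
      by_cases ht1 : (P 0).2 = 0
      · have ht2 : (P 1).2 ≠ 0 := by
          intro ht2
          apply hdet 0 1 (by decide)
          rw [ht1, ht2]; ring
        have := e2
        rw [ha] at this
        have h' : coeff (Finsupp.single 1 3) Q * (P 1).2^3 = 0 := by linear_combination this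
        rcases mul_eq_zero.mp h' with h'' | h''
        · exact h''
        · exact absurd (pow_eq_zero_iff (by norm_num) |>.mp h'') ht2
      · have := e1
        rw [ha] at this
        have h' : coeff (Finsupp.single 1 3) Q * (P 0).2^3 = 0 := by linear_combination this
        rcases mul_eq_zero.mp h' with h'' | h''
        · exact h''
        · exact absurd (pow_eq_zero_iff (by norm_num) |>.mp h'') ht1
    · constructor
      · rcases mul_eq_zero.mp h3a with h' | h'
        · exact h'
        · exact absurd h' h3
      · rcases mul_eq_zero.mp h3d with h' | h'
        · exact h'
        · exact absurd h' h3
  -- conclusion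
  intro s t
  constructor
  · rw [← stmt13_eval_aeval_line A B s t F, ← hQdef, stmt13_cubicStruct Q hQ3 s t,
      had.1, had.2, hb, hc]
    ring
  · intro j
    rw [← stmt13_eval_aeval_line A B s t (pderiv j F), hR0 j, map_zero]
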